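/- Under the conditions of the dual certificate construction (contraction constant α < 1 on ‖·‖_∞, at most d error/erasure entries per row and column with ‖M‖ ≤ ηd‖M‖_∞ for M supported on Γᶜ, incoherence ‖UVᵀ‖_∞ ≤ √(μr/(n₁n₂))), the constructed Q = Q_a + Q_b satisfies ‖P_Γ(Q)‖_∞ ≤ (1/(1−α))(√(μr/(n₁n₂)) + αγ) and ‖P_{T⊥}(Q)‖ ≤ (ηd/(1−α))(√(μr/(n₁n₂)) + γ). -/

import Mathlib

open Matrix

noncomputable section

def frobNorm {m n : ℕ} (M : Matrix (Fin m) (Fin n) ℝ) : ℝ :=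
  Real.sqrt (∑ i, ∑ j, (M i j) ^ 2)

def infNorm {m n : ℕ} (M : Matrix (Fin m) (Fin n) ℝ) : ℝ :=
  ⨆ i, ⨆ j, |M i j|

def specNorm {m n : ℕ} (M : Matrix (Fin m) (Fin n) ℝ) : ℝ :=
  ‖LinearMap.toContinuousLinearMap (Matrix.toEuclideanLin M)‖

open Classical in
def projSet {m n : ℕ} (S : Set (Fin m × Fin n)) (M : Matrix (Fin m) (Fin n) ℝ) :
    Matrix (Fin m) (Fin n) ℝ :=
  Matrix.of fun i j => if (i, j) ∈ S then M i j else 0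

def projT {n₁ n₂ r : ℕ} (U : Matrix (Fin n₁) (Fin r) ℝ) (V : Matrix (Fin n₂) (Fin r) ℝ)
    (M : Matrix (Fin n₁) (Fin n₂) ℝ) : Matrix (Fin n₁) (Fin n₂) ℝ :=
  U * Uᵀ * M + M * (V * Vᵀ) - U * Uᵀ * M * (V * Vᵀ)

def finner {m n : ℕ} (A B : Matrix (Fin m) (Fin n) ℝ) : ℝ := ∑ i, ∑ j, A i j * B i j

def opNormF {m n : ℕ} (A : Matrix (Fin m) (Fin n) ℝ →ₗ[ℝ] Matrix (Fin m) (Fin n) ℝ) : ℝ :=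
  sInf {c | 0 ≤ c ∧ ∀ Z, frobNorm (A Z) ≤ c * frobNorm Z}

open Classical in
def projSetL {m n : ℕ} (S : Set (Fin m × Fin n)) :
    Matrix (Fin m) (Fin n) ℝ →ₗ[ℝ] Matrix (Fin m) (Fin n) ℝ where
  toFun := projSet S
  map_add' A B := by
    funext i j
    simp only [projSet, Matrix.of_apply, Matrix.add_apply]
    split <;> simp
  map_smul' c A := by
    funext i j
    simp only [projSet, Matrix.of_apply, Matrix.smul_apply, RingHom.id_apply, smul_eq_mul]
    split <;> simp

open Classical in
def rowCount {m n : ℕ} (S : Set (Fin m × Fin n)) (i : Fin m) : ℕ :=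
  (Finset.univ.filter fun j => (i, j) ∈ S).card

open Classical in
def colCount {m n : ℕ} (S : Set (Fin m × Fin n)) (j : Fin n) : ℕ :=
  (Finset.univ.filter fun i => (i, j) ∈ S).card

def alphaP (μ : ℝ) (r d n₁ n₂ : ℕ) : ℝ :=
  Real.sqrt (μ * r * d / n₁) + Real.sqrt (μ * r * d / n₂) +
    Real.sqrt (μ * r * d / (max n₁ n₂ : ℕ))

def sgnM {m n : ℕ} (M : Matrix (Fin m) (Fin n) ℝ) : Matrix (Fin m) (Fin n) ℝ :=
  Matrix.of fun i j => Real.sign (M i j)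

def neumann {n₁ n₂ r : ℕ} (U : Matrix (Fin n₁) (Fin r) ℝ) (V : Matrix (Fin n₂) (Fin r) ℝ)
    (G : Set (Fin n₁ × Fin n₂)) (W : Matrix (Fin n₁) (Fin n₂) ℝ) :
    Matrix (Fin n₁) (Fin n₂) ℝ :=
  ∑' k : ℕ, (fun M => projT U V (projSet G M))^[k] W

namespace Aux16

/-! ### infNorm basics -/

lemma infNorm_nonneg {m n : ℕ} (M : Matrix (Fin m) (Fin n) ℝ) : 0 ≤ infNorm M :=
  Real.iSup_nonneg fun _ => Real.iSup_nonneg fun _ => abs_nonneg _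

lemma abs_le_infNorm {m n : ℕ} (M : Matrix (Fin m) (Fin n) ℝ) (i : Fin m) (j : Fin n) :
    |M i j| ≤ infNorm M := by
  have h1 : |M i j| ≤ ⨆ j, |M i j| :=
    le_ciSup (f := fun j => |M i j|) (Set.Finite.bddAbove (Set.finite_range _)) j
  exact h1.trans
    (le_ciSup (f := fun i => ⨆ j, |M i j|) (Set.Finite.bddAbove (Set.finite_range _)) i)

lemma infNorm_le {m n : ℕ} (M : Matrix (Fin m) (Fin n) ℝ) {c : ℝ} (hc : 0 ≤ c)
    (h : ∀ i j, |M i j| ≤ c) : infNorm M ≤ c :=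
  Real.iSup_le (fun i => Real.iSup_le (fun j => h i j) hc) hc

lemma infNorm_projSet_le {m n : ℕ} (S : Set (Fin m × Fin n)) (M : Matrix (Fin m) (Fin n) ℝ) :
    infNorm (projSet S M) ≤ infNorm M := by
  refine infNorm_le _ (infNorm_nonneg M) fun i j => ?_
  classical
  simp only [projSet, Matrix.of_apply]
  split
  · exact abs_le_infNorm M i j
  · simpa using infNorm_nonneg M

lemma infNorm_add_le {m n : ℕ} (A B : Matrix (Fin m) (Fin n) ℝ) :
    infNorm (A + B) ≤ infNorm A + infNorm B := by
  refine infNorm_le _ (add_nonneg (infNorm_nonneg A) (infNorm_nonneg B)) fun i j => ?_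
  calc |(A + B) i j| = |A i j + B i j| := rfl
    _ ≤ |A i j| + |B i j| := abs_add_le _ _
    _ ≤ _ := add_le_add (abs_le_infNorm A i j) (abs_le_infNorm B i j)

lemma infNorm_neg {m n : ℕ} (A : Matrix (Fin m) (Fin n) ℝ) : infNorm (-A) = infNorm A := by
  unfold infNorm; simp

/-! ### projSet basics -/

lemma projSet_compl {m n : ℕ} (S : Set (Fin m × Fin n)) (M : Matrix (Fin m) (Fin n) ℝ) :
    projSet Sᶜ M = M - projSet S M := by
  classical
  funext i j
  simp only [projSet, Matrix.of_apply, Matrix.sub_apply, Set.mem_compl_iff]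
  by_cases h : (i, j) ∈ S <;> simp [h]

lemma projSet_idem {m n : ℕ} (S : Set (Fin m × Fin n)) (M : Matrix (Fin m) (Fin n) ℝ) :
    projSet S (projSet S M) = projSet S M := by
  classical
  funext i j
  simp only [projSet, Matrix.of_apply]
  by_cases h : (i, j) ∈ S <;> simp [h]

lemma projSet_eq_self {m n : ℕ} (S : Set (Fin m × Fin n)) (M : Matrix (Fin m) (Fin n) ℝ)
    (h : ∀ i j, (i, j) ∉ S → M i j = 0) : projSet S M = M := by
  classical
  funext i j
  simp only [projSet, Matrix.of_apply]
  by_cases hm : (i, j) ∈ S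
  · simp [hm]
  · simp [hm, h i j hm]

lemma projSet_eq_zero {m n : ℕ} (S : Set (Fin m × Fin n)) (M : Matrix (Fin m) (Fin n) ℝ)
    (h : ∀ i j, (i, j) ∈ S → M i j = 0) : projSet S M = 0 := by
  classical
  funext i j
  simp only [projSet, Matrix.of_apply]
  by_cases hm : (i, j) ∈ S
  · simp [hm, h i j hm]
  · simp [hm]

/-! ### projT algebra -/

section ProjT
variable {n₁ n₂ r : ℕ} (U : Matrix (Fin n₁) (Fin r) ℝ) (V : Matrix (Fin n₂) (Fin r) ℝ)

lemma projT_add (A B : Matrix (Fin n₁) (Fin n₂) ℝ) :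
    projT U V (A + B) = projT U V A + projT U V B := by
  simp only [projT, Matrix.mul_add, Matrix.add_mul]; abel

lemma projT_sub (A B : Matrix (Fin n₁) (Fin n₂) ℝ) :
    projT U V (A - B) = projT U V A - projT U V B := by
  simp only [projT, Matrix.mul_sub, Matrix.sub_mul]; abel

lemma projT_smul (c : ℝ) (A : Matrix (Fin n₁) (Fin n₂) ℝ) :
    projT U V (c • A) = c • projT U V A := by
  simp only [projT, Matrix.mul_smul, Matrix.smul_mul, smul_sub, smul_add]

lemma sub_projT (M : Matrix (Fin n₁) (Fin n₂) ℝ) :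
    M - projT U V M = (1 - U * Uᵀ) * M * (1 - V * Vᵀ) := by
  simp only [projT, Matrix.sub_mul, Matrix.mul_sub, Matrix.one_mul, Matrix.mul_one]
  abel

lemma projT_idem (hU : Uᵀ * U = 1) (hV : Vᵀ * V = 1) (M : Matrix (Fin n₁) (Fin n₂) ℝ) :
    projT U V (projT U V M) = projT U V M := by
  have hUc : ∀ {p : ℕ} (X : Matrix (Fin r) (Fin p) ℝ), Uᵀ * (U * X) = X := fun X => by
    rw [← Matrix.mul_assoc, hU, Matrix.one_mul]
  have hVc : ∀ {p : ℕ} (X : Matrix (Fin r) (Fin p) ℝ), Vᵀ * (V * X) = X := fun X => by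
    rw [← Matrix.mul_assoc, hV, Matrix.one_mul]
  simp only [projT, Matrix.mul_add, Matrix.add_mul, Matrix.mul_sub, Matrix.sub_mul,
    Matrix.mul_assoc, hUc, hVc]
  abel

lemma projT_UV (hU : Uᵀ * U = 1) (hV : Vᵀ * V = 1) : projT U V (U * Vᵀ) = U * Vᵀ := by
  have hUc : ∀ {p : ℕ} (X : Matrix (Fin r) (Fin p) ℝ), Uᵀ * (U * X) = X := fun X => by
    rw [← Matrix.mul_assoc, hU, Matrix.one_mul]
  have hVc : ∀ {p : ℕ} (X : Matrix (Fin r) (Fin p) ℝ), Vᵀ * (V * X) = X := fun X => by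
    rw [← Matrix.mul_assoc, hV, Matrix.one_mul]
  simp only [projT, Matrix.mul_assoc, hUc, hVc]
  abel

end ProjT

/-! ### Neumann series -/

section Neumann
variable {n₁ n₂ r : ℕ} (U : Matrix (Fin n₁) (Fin r) ℝ) (V : Matrix (Fin n₂) (Fin r) ℝ)
  (G : Set (Fin n₁ × Fin n₂)) {α : ℝ}

lemma iter_bound (hα0 : 0 ≤ α)
    (hcontr : ∀ W, infNorm (projT U V (projSet G W)) ≤ α * infNorm W)
    (W : Matrix (Fin n₁) (Fin n₂) ℝ) (k : ℕ) :
    infNorm ((fun M => projT U V (projSet G M))^[k] W) ≤ α ^ k * infNorm W := by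
  induction k with
  | zero => simp
  | succ k ih =>
    rw [Function.iterate_succ_apply']
    calc infNorm (projT U V (projSet G ((fun M => projT U V (projSet G M))^[k] W)))
        ≤ α * infNorm ((fun M => projT U V (projSet G M))^[k] W) := hcontr _
      _ ≤ α * (α ^ k * infNorm W) := mul_le_mul_of_nonneg_left ih hα0
      _ = α ^ (k + 1) * infNorm W := by ring

lemma summable_iter (hα0 : 0 ≤ α) (hα : α < 1)
    (hcontr : ∀ W, infNorm (projT U V (projSet G W)) ≤ α * infNorm W)
    (W : Matrix (Fin n₁) (Fin n₂) ℝ) :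
    Summable (fun k : ℕ => (fun M => projT U V (projSet G M))^[k] W) := by
  rw [show (Summable fun k : ℕ => (fun M => projT U V (projSet G M))^[k] W) ↔ _ from Pi.summable]
  intro i
  rw [show _ ↔ _ from Pi.summable]
  intro j
  apply Summable.of_norm_bounded
    (((summable_geometric_of_lt_one hα0 hα)).mul_right _)
  intro k
  exact (abs_le_infNorm _ i j).trans (iter_bound U V G hα0 hcontr W k)

lemma neumann_entry (hα0 : 0 ≤ α) (hα : α < 1)
    (hcontr : ∀ W, infNorm (projT U V (projSet G W)) ≤ α * infNorm W)
    (W : Matrix (Fin n₁) (Fin n₂) ℝ) (i : Fin n₁) (j : Fin n₂) :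
    neumann U V G W i j = ∑' k : ℕ, ((fun M => projT U V (projSet G M))^[k] W) i j := by
  have hs := summable_iter U V G hα0 hα hcontr W
  rw [neumann]
  have h1 := tsum_apply (f := fun k : ℕ =>
    ((fun M => projT U V (projSet G M))^[k] W : Fin n₁ → Fin n₂ → ℝ)) hs (x := i)
  exact (congrFun h1 j).trans (tsum_apply ((Pi.summable.mp hs) i))

set_option maxHeartbeats 1000000 in
lemma infNorm_neumann_le (hα0 : 0 ≤ α) (hα : α < 1)
    (hcontr : ∀ W, infNorm (projT U V (projSet G W)) ≤ α * infNorm W)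
    (W : Matrix (Fin n₁) (Fin n₂) ℝ) :
    infNorm (neumann U V G W) ≤ (1 - α)⁻¹ * infNorm W := by
  have h1α : 0 < 1 - α := by linarith
  refine infNorm_le _ (mul_nonneg (inv_nonneg.mpr h1α.le) (infNorm_nonneg W)) fun i j => ?_
  rw [neumann_entry U V G hα0 hα hcontr W i j]
  have hb : ∀ k : ℕ, |((fun M => projT U V (projSet G M))^[k] W) i j| ≤ α ^ k * infNorm W :=
    fun k => (abs_le_infNorm _ i j).trans (iter_bound U V G hα0 hcontr W k)
  have hsum : Summable (fun k : ℕ => α ^ k * infNorm W) :=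
    (summable_geometric_of_lt_one hα0 hα).mul_right _
  generalize hf : (fun k : ℕ => ((fun M => projT U V (projSet G M))^[k] W) i j) = f
  have hb' : ∀ k, |f k| ≤ α ^ k * infNorm W := by rw [← hf]; exact hb
  have habs : Summable (fun k => |f k|) :=
    Summable.of_nonneg_of_le (fun k => abs_nonneg _) hb' hsum
  have h1 : |∑' k, f k| ≤ ∑' k, |f k| := by
    have h := norm_tsum_le_tsum_norm (f := f) (by simpa only [Real.norm_eq_abs] using habs)
    simpa only [Real.norm_eq_abs] using h
  have h2 : (∑' k, |f k|) ≤ ∑' k : ℕ, α ^ k * infNorm W := Summable.tsum_le_tsum hb' habs hsum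
  have h3 : (∑' k : ℕ, α ^ k * infNorm W) = (1 - α)⁻¹ * infNorm W := by
    rw [tsum_mul_right, tsum_geometric_of_lt_one hα0 hα]
  linarith

def bigL : Matrix (Fin n₁) (Fin n₂) ℝ →L[ℝ] Matrix (Fin n₁) (Fin n₂) ℝ :=
  LinearMap.toContinuousLinearMap
    { toFun := fun M => projT U V (projSet G M)
      map_add' := fun A B => by
        classical
        have : projSet G (A + B) = projSet G A + projSet G B := by
          funext i j
          simp only [projSet, Matrix.of_apply, Matrix.add_apply]
          split <;> simp
        show projT U V (projSet G (A + B)) = _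
        rw [this, projT_add]
      map_smul' := fun c A => by
        classical
        have : projSet G (c • A) = c • projSet G A := by
          funext i j
          simp only [projSet, Matrix.of_apply, Matrix.smul_apply, smul_eq_mul]
          split <;> simp
        show projT U V (projSet G (c • A)) = _
        rw [this, projT_smul]; rfl }

lemma neumann_fixed (W : Matrix (Fin n₁) (Fin n₂) ℝ)
    (hs : Summable (fun k : ℕ => (fun M => projT U V (projSet G M))^[k] W)) :
    neumann U V G W = W + projT U V (projSet G (neumann U V G W)) := by
  have hs' : Summable (fun k : ℕ => (⇑(bigL U V G))^[k] W) := hs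
  show (∑' k : ℕ, (⇑(bigL U V G))^[k] W) = W + bigL U V G (∑' k : ℕ, (⇑(bigL U V G))^[k] W)
  calc (∑' k : ℕ, (⇑(bigL U V G))^[k] W)
      = (⇑(bigL U V G))^[0] W + ∑' k : ℕ, (⇑(bigL U V G))^[k + 1] W := Summable.tsum_eq_zero_add hs'
    _ = W + ∑' k : ℕ, bigL U V G ((⇑(bigL U V G))^[k] W) := by
        rw [Function.iterate_zero_apply]
        exact congrArg _ (tsum_congr fun k => Function.iterate_succ_apply' _ k W)
    _ = W + bigL U V G (∑' k : ℕ, (⇑(bigL U V G))^[k] W) := by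
        rw [(bigL U V G).map_tsum hs']

end Neumann

/-! ### Spectral norm -/

lemma specNorm_nonneg {m n : ℕ} (M : Matrix (Fin m) (Fin n) ℝ) : 0 ≤ specNorm M :=
  norm_nonneg _

lemma specNorm_apply_le {m n : ℕ} (M : Matrix (Fin m) (Fin n) ℝ) (x : EuclideanSpace ℝ (Fin n)) :
    ‖Matrix.toEuclideanLin M x‖ ≤ specNorm M * ‖x‖ :=
  (LinearMap.toContinuousLinearMap (Matrix.toEuclideanLin M)).le_opNorm x

lemma specNorm_le {m n : ℕ} (M : Matrix (Fin m) (Fin n) ℝ) {c : ℝ} (hc : 0 ≤ c)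
    (h : ∀ x : EuclideanSpace ℝ (Fin n), ‖Matrix.toEuclideanLin M x‖ ≤ c * ‖x‖) :
    specNorm M ≤ c :=
  ContinuousLinearMap.opNorm_le_bound _ hc h

lemma toEuclideanLin_mul {a b c : ℕ} (M : Matrix (Fin a) (Fin b) ℝ)
    (K : Matrix (Fin b) (Fin c) ℝ) (x : EuclideanSpace ℝ (Fin c)) :
    Matrix.toEuclideanLin (M * K) x = Matrix.toEuclideanLin M (Matrix.toEuclideanLin K x) := by
  rw [Matrix.toEuclideanLin_apply, Matrix.toEuclideanLin_apply, Matrix.toEuclideanLin_apply]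
  simp [Matrix.mulVec_mulVec]

lemma proj_contract {k r : ℕ} (U : Matrix (Fin k) (Fin r) ℝ) (hU : Uᵀ * U = 1)
    (x : EuclideanSpace ℝ (Fin k)) :
    ‖Matrix.toEuclideanLin (1 - U * Uᵀ) x‖ ≤ ‖x‖ := by
  have hP : (U * Uᵀ) * (U * Uᵀ) = U * Uᵀ := by
    rw [Matrix.mul_assoc, ← Matrix.mul_assoc Uᵀ U Uᵀ, hU, Matrix.one_mul]
  set v : Fin k → ℝ := (WithLp.equiv 2 (Fin k → ℝ)) x with hv
  set z : Fin k → ℝ := (U * Uᵀ) *ᵥ v with hz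
  have hzz : z ⬝ᵥ z = v ⬝ᵥ z := by
    calc z ⬝ᵥ z = (z ᵥ* (U * Uᵀ)) ⬝ᵥ v := by rw [← Matrix.dotProduct_mulVec]
      _ = ((U * Uᵀ)ᵀ *ᵥ z) ⬝ᵥ v := by rw [Matrix.mulVec_transpose]
      _ = ((U * Uᵀ) *ᵥ z) ⬝ᵥ v := by rw [Matrix.transpose_mul, Matrix.transpose_transpose]
      _ = (((U * Uᵀ) * (U * Uᵀ)) *ᵥ v) ⬝ᵥ v := by rw [hz, Matrix.mulVec_mulVec]
      _ = z ⬝ᵥ v := by rw [hP]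
      _ = v ⬝ᵥ z := dotProduct_comm _ _
  have hvz : 0 ≤ v ⬝ᵥ z := by
    have : v ⬝ᵥ z = (Uᵀ *ᵥ v) ⬝ᵥ (Uᵀ *ᵥ v) := by
      calc v ⬝ᵥ z = v ⬝ᵥ (U *ᵥ (Uᵀ *ᵥ v)) := by rw [hz, Matrix.mulVec_mulVec]
        _ = (v ᵥ* U) ⬝ᵥ (Uᵀ *ᵥ v) := Matrix.dotProduct_mulVec _ _ _
        _ = (Uᵀ *ᵥ v) ⬝ᵥ (Uᵀ *ᵥ v) := by rw [← Matrix.mulVec_transpose]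
    rw [this]
    exact Finset.sum_nonneg fun i _ => mul_self_nonneg _
  have hnx : ‖x‖ ^ 2 = v ⬝ᵥ v := by
    rw [EuclideanSpace.norm_eq, Real.sq_sqrt (Finset.sum_nonneg fun i _ => sq_nonneg _)]
    simp only [dotProduct, Real.norm_eq_abs, pow_two, abs_mul_abs_self]
    rfl
  have happ : (WithLp.equiv 2 (Fin k → ℝ)) (Matrix.toEuclideanLin (1 - U * Uᵀ) x) = v - z := by
    show (1 - U * Uᵀ) *ᵥ v = v - z
    rw [Matrix.sub_mulVec, Matrix.one_mulVec, hz]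
  have hny : ‖Matrix.toEuclideanLin (1 - U * Uᵀ) x‖ ^ 2 = (v - z) ⬝ᵥ (v - z) := by
    rw [EuclideanSpace.norm_eq, Real.sq_sqrt (Finset.sum_nonneg fun i _ => sq_nonneg _)]
    have : ∀ i, (Matrix.toEuclideanLin (1 - U * Uᵀ) x) i = (v - z) i := fun i =>
      congrFun happ i
    simp only [dotProduct, Real.norm_eq_abs, sq_abs]
    refine Finset.sum_congr rfl fun i _ => ?_
    rw [this i]; ring
  have hexp : (v - z) ⬝ᵥ (v - z) = v ⬝ᵥ v - v ⬝ᵥ z := by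
    rw [sub_dotProduct, dotProduct_sub, dotProduct_sub, hzz,
      dotProduct_comm z v]
    ring
  have hle : ‖Matrix.toEuclideanLin (1 - U * Uᵀ) x‖ ^ 2 ≤ ‖x‖ ^ 2 := by
    rw [hny, hexp, hnx]; linarith
  nlinarith [norm_nonneg x, norm_nonneg (Matrix.toEuclideanLin (1 - U * Uᵀ) x), hle]

lemma specNorm_sandwich {n₁ n₂ r : ℕ} (U : Matrix (Fin n₁) (Fin r) ℝ)
    (V : Matrix (Fin n₂) (Fin r) ℝ) (hU : Uᵀ * U = 1) (hV : Vᵀ * V = 1)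
    (X : Matrix (Fin n₁) (Fin n₂) ℝ) :
    specNorm ((1 - U * Uᵀ) * X * (1 - V * Vᵀ)) ≤ specNorm X := by
  refine specNorm_le _ (specNorm_nonneg X) fun x => ?_
  rw [toEuclideanLin_mul ((1 - U * Uᵀ) * X) (1 - V * Vᵀ) x,
    toEuclideanLin_mul (1 - U * Uᵀ) X _]
  calc ‖Matrix.toEuclideanLin (1 - U * Uᵀ)
          (Matrix.toEuclideanLin X (Matrix.toEuclideanLin (1 - V * Vᵀ) x))‖
      ≤ ‖Matrix.toEuclideanLin X (Matrix.toEuclideanLin (1 - V * Vᵀ) x)‖ :=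
        proj_contract U hU _
    _ ≤ specNorm X * ‖Matrix.toEuclideanLin (1 - V * Vᵀ) x‖ := specNorm_apply_le _ _
    _ ≤ specNorm X * ‖x‖ :=
        mul_le_mul_of_nonneg_left (proj_contract V hV x) (specNorm_nonneg X)

end Aux16

open Aux16

theorem stmt16 (n₁ n₂ r d : ℕ) (α γ η μ : ℝ)
    (hα0 : 0 ≤ α) (hα : α < 1) (hγ : 0 < γ) (hη : 0 < η) (hη1 : η ≤ 1)
    (U : Matrix (Fin n₁) (Fin r) ℝ) (V : Matrix (Fin n₂) (Fin r) ℝ)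
    (hU : Uᵀ * U = 1) (hV : Vᵀ * V = 1)
    (Φ G : Set (Fin n₁ × Fin n₂))
    (Astar : Matrix (Fin n₁) (Fin n₂) ℝ)
    (hsupp : ∀ i j, Astar i j ≠ 0 → (i, j) ∈ G ∧ (i, j) ∈ Φ)
    (hcontr : ∀ W, infNorm (projT U V (projSet G W)) ≤ α * infNorm W)
    (hrow : ∀ i, rowCount G i ≤ d) (hcol : ∀ j, colCount G j ≤ d)
    (hηd : ∀ M : Matrix (Fin n₁) (Fin n₂) ℝ,
      (∀ e : Fin n₁ × Fin n₂, e ∉ G → M e.1 e.2 = 0) →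
      specNorm M ≤ η * d * infNorm M)
    (hinc : infNorm (U * Vᵀ) ≤ Real.sqrt (μ * r / (n₁ * n₂))) :
    let Mstar := γ • sgnM Astar
    let Nstar := U * Vᵀ
    let Qa := Mstar - projSet Gᶜ (neumann U V G (projT U V Mstar))
    let Qb := neumann U V G (Nstar - projSet G Nstar)
    let Q := Qa + Qb
    infNorm (projSet Gᶜ Q) ≤ (1 / (1 - α)) * (Real.sqrt (μ * r / (n₁ * n₂)) + α * γ) ∧
      specNorm (Q - projT U V Q) ≤
        (η * d / (1 - α)) * (Real.sqrt (μ * r / (n₁ * n₂)) + γ) := by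
  intro Mstar Nstar Qa Qb Q
  have h1α : 0 < 1 - α := by linarith
  set s : ℝ := Real.sqrt (μ * r / (n₁ * n₂)) with hs
  have hs0 : 0 ≤ s := Real.sqrt_nonneg _
  -- entries of Mstar
  have hMent : ∀ i j, Mstar i j = γ * Real.sign (Astar i j) := fun i j => rfl
  have hM0 : ∀ i j, (i, j) ∉ G → Mstar i j = 0 := by
    intro i j hij
    have hA : Astar i j = 0 := by
      by_contra h
      exact hij (hsupp i j h).1
    rw [hMent i j, hA, Real.sign_zero, mul_zero]
  have habs_sign : ∀ x : ℝ, |Real.sign x| ≤ 1 := by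
    intro x
    rcases lt_trichotomy x 0 with h | h | h
    · simp [Real.sign_of_neg h]
    · simp [h]
    · simp [Real.sign_of_pos h]
  have hinfM : infNorm Mstar ≤ γ := by
    refine infNorm_le _ hγ.le fun i j => ?_
    rw [hMent i j, abs_mul]
    calc |γ| * |Real.sign (Astar i j)| ≤ |γ| * 1 :=
          mul_le_mul_of_nonneg_left (habs_sign _) (abs_nonneg _)
      _ = γ := by rw [mul_one, abs_of_pos hγ]
  have hMG : projSet G Mstar = Mstar := projSet_eq_self G Mstar hM0
  set Y := neumann U V G (projT U V Mstar) with hYdef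
  set Z := neumann U V G (Nstar - projSet G Nstar) with hZdef
  have hsY := summable_iter U V G hα0 hα hcontr (projT U V Mstar)
  have hsZ := summable_iter U V G hα0 hα hcontr (Nstar - projSet G Nstar)
  have hYf : Y = projT U V Mstar + projT U V (projSet G Y) :=
    neumann_fixed U V G _ hsY
  have hZf : Z = (Nstar - projSet G Nstar) + projT U V (projSet G Z) :=
    neumann_fixed U V G _ hsZ
  -- infNorm bounds
  have hinfPM : infNorm (projT U V Mstar) ≤ α * γ := by
    have h := hcontr Mstar
    rw [hMG] at h
    exact h.trans (mul_le_mul_of_nonneg_left hinfM hα0)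
  have hinfY : infNorm Y ≤ (1 - α)⁻¹ * (α * γ) :=
    (infNorm_neumann_le U V G hα0 hα hcontr _).trans
      (mul_le_mul_of_nonneg_left hinfPM (inv_nonneg.mpr h1α.le))
  have hNsub : Nstar - projSet G Nstar = projSet Gᶜ Nstar := (projSet_compl G Nstar).symm
  have hinfNc : infNorm (Nstar - projSet G Nstar) ≤ s := by
    rw [hNsub]
    exact (infNorm_projSet_le _ _).trans hinc
  have hinfZ : infNorm Z ≤ (1 - α)⁻¹ * s :=
    (infNorm_neumann_le U V G hα0 hα hcontr _).trans
      (mul_le_mul_of_nonneg_left hinfNc (inv_nonneg.mpr h1α.le))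
  have hinfN : infNorm (projSet G Nstar) ≤ s := (infNorm_projSet_le _ _).trans hinc
  constructor
  · -- Part 1
    have hsplit : projSet Gᶜ Q = projSet Gᶜ Qa + projSet Gᶜ Qb :=
      map_add (projSetL Gᶜ) Qa Qb
    have hQa : projSet Gᶜ Qa = projSet Gᶜ Mstar - projSet Gᶜ (projSet Gᶜ Y) :=
      map_sub (projSetL Gᶜ) Mstar (projSet Gᶜ Y)
    have hMc0 : projSet Gᶜ Mstar = 0 :=
      projSet_eq_zero Gᶜ Mstar fun i j hij => hM0 i j hij
    have hQa' : infNorm (projSet Gᶜ Qa) ≤ (1 - α)⁻¹ * (α * γ) := by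
      rw [hQa, hMc0, projSet_idem, zero_sub, infNorm_neg]
      exact (infNorm_projSet_le _ _).trans hinfY
    have hQb' : infNorm (projSet Gᶜ Qb) ≤ (1 - α)⁻¹ * s :=
      (infNorm_projSet_le _ _).trans hinfZ
    calc infNorm (projSet Gᶜ Q)
        ≤ infNorm (projSet Gᶜ Qa) + infNorm (projSet Gᶜ Qb) := by
          rw [hsplit]; exact infNorm_add_le _ _
      _ ≤ (1 - α)⁻¹ * (α * γ) + (1 - α)⁻¹ * s := add_le_add hQa' hQb'
      _ = (1 / (1 - α)) * (s + α * γ) := by field_simp; ring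
  · -- Part 2
    set X := Mstar + projSet G Y - projSet G Nstar with hXdef
    -- key algebraic identity
    have hQX : Q - X = projT U V (Nstar + projSet G Z - (Mstar + projSet G Y)) := by
      have h5 : Z - Y =
          ((Nstar - projSet G Nstar) + projT U V (projSet G Z)) -
            (projT U V Mstar + projT U V (projSet G Y)) := by
        rw [← hZf, ← hYf]
      have hcompl : projSet Gᶜ Y = Y - projSet G Y := projSet_compl G Y
      calc Q - X = Z - Y + projSet G Nstar := by
            show Mstar - projSet Gᶜ Y + Z - (Mstar + projSet G Y - projSet G Nstar) = _
            rw [hcompl]; abel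
        _ = ((Nstar - projSet G Nstar) + projT U V (projSet G Z)) -
              (projT U V Mstar + projT U V (projSet G Y)) + projSet G Nstar := by rw [h5]
        _ = projT U V Nstar + projT U V (projSet G Z) -
              (projT U V Mstar + projT U V (projSet G Y)) := by
            rw [projT_UV U V hU hV]; abel
        _ = projT U V (Nstar + projSet G Z - (Mstar + projSet G Y)) := by
            rw [projT_sub, projT_add, projT_add]
    have hfix : projT U V (Q - X) = Q - X := by
      rw [hQX, projT_idem U V hU hV]
    have hkey : Q - projT U V Q = (1 - U * Uᵀ) * X * (1 - V * Vᵀ) := by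
      have hsplit : projT U V Q = projT U V X + projT U V (Q - X) := by
        have h6 : X + (Q - X) = Q := by abel
        rw [← projT_add, h6]
      have : Q - projT U V Q = X - projT U V X := by
        rw [hsplit, hfix]; abel
      rw [this, sub_projT]
    -- support of X
    have hXsupp : ∀ e : Fin n₁ × Fin n₂, e ∉ G → X e.1 e.2 = 0 := by
      classical
      intro e he
      obtain ⟨i, j⟩ := e
      show (Mstar + projSet G Y - projSet G Nstar) i j = 0
      have h1 : projSet G Y i j = 0 := by simp [projSet, he]
      have h2 : projSet G Nstar i j = 0 := by simp [projSet, he]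
      have h3 : Mstar i j = 0 := hM0 i j he
      simp [Matrix.sub_apply, Matrix.add_apply, h1, h2, h3]
    -- infNorm bound on X
    have hinfX : infNorm X ≤ γ + (1 - α)⁻¹ * (α * γ) + s := by
      calc infNorm X ≤ infNorm (Mstar + projSet G Y) + infNorm (-projSet G Nstar) := by
            rw [hXdef, sub_eq_add_neg]
            exact infNorm_add_le _ _
        _ ≤ infNorm Mstar + infNorm (projSet G Y) + infNorm (projSet G Nstar) := by
            rw [infNorm_neg]
            exact add_le_add (infNorm_add_le _ _) le_rfl
        _ ≤ γ + (1 - α)⁻¹ * (α * γ) + s :=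
            add_le_add (add_le_add hinfM ((infNorm_projSet_le _ _).trans hinfY)) hinfN
    have hηd0 : (0 : ℝ) ≤ η * d := mul_nonneg hη.le (Nat.cast_nonneg d)
    calc specNorm (Q - projT U V Q) = specNorm ((1 - U * Uᵀ) * X * (1 - V * Vᵀ)) := by
          rw [hkey]
      _ ≤ specNorm X := specNorm_sandwich U V hU hV X
      _ ≤ η * d * infNorm X := hηd X hXsupp
      _ ≤ η * d * ((s + γ) / (1 - α)) := by
          refine mul_le_mul_of_nonneg_left (hinfX.trans ?_) hηd0
          rw [le_div_iff₀ h1α]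
          have hsa : α * s ≥ 0 := mul_nonneg hα0 hs0
          field_simp
          nlinarith [hs0, hγ.le, hα0]
      _ = (η * d / (1 - α)) * (s + γ) := by ring

end
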